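/- Let f_j : ℝⁿ → ℝ be continuously differentiable and g_j : ℝⁿ → ℝ be convex and continuous, and set F_j = f_j + g_j. If d ∈ ℝⁿ satisfies ∇f_j(x)ᵀd + g_j(x+d) − g_j(x) < 0 for every j = 1,…,m, then the directional derivatives satisfy F_j'(x; d) < 0 for every j = 1,…,m. -/

import Mathlib

open Filter Topology Finset
open scoped RealInnerProductSpace

noncomputable section

/-- One-sided directional derivative: `c = F'(x; d) = lim_{α→0⁺} (F(x+αd) − F(x))/α`. -/
def HasDirDeriv {n : ℕ} (F : EuclideanSpace ℝ (Fin n) → ℝ)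
    (x d : EuclideanSpace ℝ (Fin n)) (c : ℝ) : Prop :=
  Filter.Tendsto (fun α : ℝ => (F (x + α • d) - F x) / α) (nhdsWithin 0 (Set.Ioi 0)) (nhds c)

/-- Subdifferential of a convex function: `∂h(x) = {ξ : h(y) ≥ h(x) + ⟪ξ, y − x⟫ ∀ y}`. -/
def subdiff {n : ℕ} (h : EuclideanSpace ℝ (Fin n) → ℝ) (x : EuclideanSpace ℝ (Fin n)) :
    Set (EuclideanSpace ℝ (Fin n)) :=
  {ξ | ∀ y, h x + ⟪ξ, y - x⟫ ≤ h y}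

/-- if `∇f_j(x)ᵀd + g_j(x+d) − g_j(x) < 0` for every `j`, then the one-sided
directional derivatives of `F_j = f_j + g_j` satisfy `F_j'(x; d) < 0` for every `j`. -/
theorem directional_derivative_negative {n m : ℕ}
    (f g : Fin (m + 1) → EuclideanSpace ℝ (Fin n) → ℝ)
    (hfC1 : ∀ j, ContDiff ℝ 1 (f j))
    (hgconv : ∀ j, ConvexOn ℝ Set.univ (g j))
    (hgcont : ∀ j, Continuous (g j))
    (x d : EuclideanSpace ℝ (Fin n))
    (F' : Fin (m + 1) → ℝ)
    (hF' : ∀ j, HasDirDeriv (fun y => f j y + g j y) x d (F' j))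
    (hneg : ∀ j, ⟪gradient (f j) x, d⟫ + g j (x + d) - g j x < 0) :
    ∀ j, F' j < 0 := by
  intro j
  set L : ℝ := ⟪gradient (f j) x, d⟫ with hL
  -- f-part: difference quotient tends to L
  have hdiff : DifferentiableAt ℝ (f j) x :=
    ((hfC1 j).differentiable one_ne_zero).differentiableAt
  have hgrad : HasGradientAt (f j) (gradient (f j) x) x := hdiff.hasGradientAt
  have hfd : HasFDerivAt (f j) ((InnerProductSpace.toDual ℝ _) (gradient (f j) x)) x := hgrad
  have hline : HasLineDerivAt ℝ (f j) L x d := by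
    have := hfd.hasLineDerivAt (v := d)
    simpa only [InnerProductSpace.toDual_apply_apply] using this
  have hfquot : Tendsto (fun α : ℝ => (f j (x + α • d) - f j x) / α)
      (nhdsWithin 0 (Set.Ioi 0)) (nhds L) := by
    have h1 : HasDerivAt (fun t : ℝ => f j (x + t • d)) L 0 := hline
    have h2 := hasDerivAt_iff_tendsto_slope.mp h1
    have h3 : Tendsto (slope (fun t : ℝ => f j (x + t • d)) 0)
        (nhdsWithin 0 (Set.Ioi 0)) (nhds L) :=
      h2.mono_left (nhdsWithin_mono 0 (fun a ha => ne_of_gt ha))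
    refine h3.congr' ?_
    filter_upwards [self_mem_nhdsWithin] with α (hα : α ∈ Set.Ioi 0)
    simp [slope_def_field, div_eq_inv_mul]
  -- g-part quotient tends to F' j - L
  have hgquot : Tendsto (fun α : ℝ => (g j (x + α • d) - g j x) / α)
      (nhdsWithin 0 (Set.Ioi 0)) (nhds (F' j - L)) := by
    have := (hF' j).sub hfquot
    refine this.congr fun α => ?_
    rw [← sub_div]
    ring_nf
  -- pointwise bound by convexity for 0 < α ≤ 1
  have hbound : ∀ᶠ α in nhdsWithin (0:ℝ) (Set.Ioi 0),
      (g j (x + α • d) - g j x) / α ≤ g j (x + d) - g j x := by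
    have hmem : Set.Ioc (0:ℝ) 1 ∈ nhdsWithin (0:ℝ) (Set.Ioi 0) := by
      refine mem_nhdsWithin.mpr ⟨Set.Iio 1, isOpen_Iio, by norm_num, ?_⟩
      rintro α ⟨h1, h2⟩
      exact ⟨h2, le_of_lt h1⟩
    filter_upwards [hmem] with α hα
    obtain ⟨hα0, hα1⟩ := hα
    have hconv := (hgconv j).2 (Set.mem_univ (x + d)) (Set.mem_univ x)
      (le_of_lt hα0) (by linarith : (0:ℝ) ≤ 1 - α) (by ring)
    have hxe : α • (x + d) + (1 - α) • x = x + α • d := by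
      module
    rw [hxe] at hconv
    rw [div_le_iff₀ hα0]
    simp only [smul_eq_mul] at hconv
    nlinarith [hconv]
  have hle : F' j - L ≤ g j (x + d) - g j x :=
    le_of_tendsto hgquot hbound
  have := hneg j
  linarith
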